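/- The function F₃ : ℝ³ → ℝ defined by F₃(s,λ,r) = (1/2048)·cos(8s)·e^{8λ} + (3/128)·cosh(4s)·e^{−8λ} − (1/32)·(s·sinh(4s) − 4λ·cosh(4s) + 12r·sinh(4s))·e^{−8λ} − (49/2048 − λ/4 + (3/64)·(16r − s)² + λ²)·e^{8λ} satisfies the partial differential equation ∂³F₃/∂s²∂λ + ∂²F₃/∂λ² + (4/3)·∂²F₃/∂s∂r − 8·∂²F₃/∂s² − 16·∂F₃/∂λ + 64·F₃ = 0 at every point of ℝ³. -/

import Mathlib

noncomputable def F₃ (s l r : ℝ) : ℝ :=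
  (1 / 2048) * Real.cos (8 * s) * Real.exp (8 * l)
    + (3 / 128) * Real.cosh (4 * s) * Real.exp (-8 * l)
    - (1 / 32) * (s * Real.sinh (4 * s) - 4 * l * Real.cosh (4 * s)
        + 12 * r * Real.sinh (4 * s)) * Real.exp (-8 * l)
    - (49 / 2048 - l / 4 + (3 / 64) * (16 * r - s) ^ 2 + l ^ 2) * Real.exp (8 * l)

lemma poly2 (a b c x : ℝ) : HasDerivAt (fun y => a + b*y + c*y^2) (b + 2*c*x) x := by
  have H := ((hasDerivAt_const x a).add ((hasDerivAt_id x).const_mul b)).add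
    ((hasDerivAt_pow 2 x).const_mul c)
  simp only [Pi.add_def, id] at H
  exact H.congr_deriv (by norm_num; ring)

lemma master_l (a b c d e f x : ℝ) :
    HasDerivAt (fun y => (a + b*y + c*y^2) * Real.exp (8*y) + (d + e*y + f*y^2) * Real.exp (-8*y))
      ((b + 2*c*x + 8*(a + b*x + c*x^2)) * Real.exp (8*x)
        + (e + 2*f*x - 8*(d + e*x + f*x^2)) * Real.exp (-8*x)) x := by
  have h8 : HasDerivAt (fun y : ℝ => Real.exp (8*y)) (8 * Real.exp (8*x)) x := by
    have := (((hasDerivAt_id x).const_mul (8:ℝ))).exp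
    simp only [id_eq] at this; convert this using 1; ring
  have hm8 : HasDerivAt (fun y : ℝ => Real.exp (-8*y)) (-8 * Real.exp (-8*x)) x := by
    have := (((hasDerivAt_id x).const_mul (-8:ℝ))).exp
    simp only [id_eq] at this; convert this using 1; ring
  have H := ((poly2 a b c x).mul h8).add ((poly2 d e f x).mul hm8)
  simp only [Pi.add_def, Pi.mul_def] at H
  exact H.congr_deriv (by ring)

lemma master_s (a0 b0 c0 a1 b1 c1 a2 b2 c2 a3 b3 c3 a4 b4 c4 x : ℝ) :
    HasDerivAt (fun y => (a0 + b0*y + c0*y^2) + (a1 + b1*y + c1*y^2) * Real.cos (8*y)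
        + (a2 + b2*y + c2*y^2) * Real.sin (8*y) + (a3 + b3*y + c3*y^2) * Real.cosh (4*y)
        + (a4 + b4*y + c4*y^2) * Real.sinh (4*y))
      ((b0 + 2*c0*x)
        + ((b1 + 2*c1*x) * Real.cos (8*x) - 8*(a1 + b1*x + c1*x^2) * Real.sin (8*x))
        + ((b2 + 2*c2*x) * Real.sin (8*x) + 8*(a2 + b2*x + c2*x^2) * Real.cos (8*x))
        + ((b3 + 2*c3*x) * Real.cosh (4*x) + 4*(a3 + b3*x + c3*x^2) * Real.sinh (4*x))
        + ((b4 + 2*c4*x) * Real.sinh (4*x) + 4*(a4 + b4*x + c4*x^2) * Real.cosh (4*x))) x := by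
  have hc : HasDerivAt (fun y : ℝ => Real.cos (8*y)) (-8 * Real.sin (8*x)) x := by
    have := (((hasDerivAt_id x).const_mul (8:ℝ))).cos
    simp only [id_eq] at this; convert this using 1; ring
  have hs : HasDerivAt (fun y : ℝ => Real.sin (8*y)) (8 * Real.cos (8*x)) x := by
    have := (((hasDerivAt_id x).const_mul (8:ℝ))).sin
    simp only [id_eq] at this; convert this using 1; ring
  have hch : HasDerivAt (fun y : ℝ => Real.cosh (4*y)) (4 * Real.sinh (4*x)) x := by
    have := (((hasDerivAt_id x).const_mul (4:ℝ))).cosh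
    simp only [id_eq] at this; convert this using 1; ring
  have hsh : HasDerivAt (fun y : ℝ => Real.sinh (4*y)) (4 * Real.cosh (4*x)) x := by
    have := (((hasDerivAt_id x).const_mul (4:ℝ))).sinh
    simp only [id_eq] at this; convert this using 1; ring
  have H := (((((poly2 a0 b0 c0 x).add ((poly2 a1 b1 c1 x).mul hc))).add
      ((poly2 a2 b2 c2 x).mul hs)).add ((poly2 a3 b3 c3 x).mul hch)).add
      ((poly2 a4 b4 c4 x).mul hsh)
  simp only [Pi.add_def, Pi.mul_def] at H
  exact H.congr_deriv (by ring)


noncomputable def G (s l r : ℝ) : ℝ := (15/256 : ℝ) * Real.exp (8*l) + (-1/16 : ℝ) * Real.cosh (4*s) * Real.exp (-8*l) + (1/256 : ℝ) * Real.cos (8*s) * Real.exp (8*l) + (3 : ℝ) * r * Real.sinh (4*s) * Real.exp (-8*l) + (-96 : ℝ) * r * r * Real.exp (8*l) + (-1 : ℝ) * l * Real.cosh (4*s) * Real.exp (-8*l) + (-8 : ℝ) * l * l * Real.exp (8*l) + (1/4 : ℝ) * s * Real.sinh (4*s) * Real.exp (-8*l) + (12 : ℝ) * s * r * Real.exp (8*l)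 + (-3/8 : ℝ) * s * s * Real.exp (8*l)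

noncomputable def Gs (s l r : ℝ) : ℝ := (-1/32 : ℝ) * Real.sin (8*s) * Real.exp (8*l) + (12 : ℝ) * r * Real.exp (8*l) + (12 : ℝ) * r * Real.cosh (4*s) * Real.exp (-8*l) + (-4 : ℝ) * l * Real.sinh (4*s) * Real.exp (-8*l) + (-3/4 : ℝ) * s * Real.exp (8*l) + (1 : ℝ) * s * Real.cosh (4*s) * Real.exp (-8*l)

noncomputable def Gss (s l r : ℝ) : ℝ := (-3/4 : ℝ) * Real.exp (8*l) + (1 : ℝ) * Real.cosh (4*s) * Real.exp (-8*l) + (-1/4 : ℝ) * Real.cos (8*s) * Real.exp (8*l) + (48 : ℝ) * r * Real.sinh (4*s) * Real.exp (-8*l) + (-16 : ℝ) * l * Real.cosh (4*s) * Real.exp (-8*l) + (4 : ℝ) * s * Real.sinh (4*s) * Real.exp (-8*l)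

noncomputable def Gl (s l r : ℝ) : ℝ := (15/32 : ℝ) * Real.exp (8*l) + (-1/2 : ℝ) * Real.cosh (4*s) * Real.exp (-8*l) + (1/32 : ℝ) * Real.cos (8*s) * Real.exp (8*l) + (-24 : ℝ) * r * Real.sinh (4*s) * Real.exp (-8*l) + (-768 : ℝ) * r * r * Real.exp (8*l) + (-16 : ℝ) * l * Real.exp (8*l) + (8 : ℝ) * l * Real.cosh (4*s) * Real.exp (-8*l) + (-64 : ℝ) * l * l * Real.exp (8*l) + (-2 : ℝ) * s * Real.sinh (4*s) * Real.exp (-8*l) + (96 : ℝ) * s * r * Real.exp (8*l) + (-3 : ℝ) * s * s * Real.exp (8*l)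

noncomputable def K (s l r : ℝ) : ℝ := (-3/8 : ℝ) * Real.sinh (4*s) * Real.exp (-8*l) + (-24 : ℝ) * r * Real.exp (8*l) + (3/2 : ℝ) * s * Real.exp (8*l)

noncomputable def Ks (s l r : ℝ) : ℝ := (3/2 : ℝ) * Real.exp (8*l) + (-3/2 : ℝ) * Real.cosh (4*s) * Real.exp (-8*l)

noncomputable def L (s l r : ℝ) : ℝ := (1/16 : ℝ) * Real.sinh (4*s) * Real.exp (-8*l) + (-1/256 : ℝ) * Real.sin (8*s) * Real.exp (8*l) + (3/2 : ℝ) * r * Real.exp (8*l) + (-3/2 : ℝ) * r * Real.cosh (4*s) * Real.exp (-8*l) + (1/2 : ℝ) * l * Real.sinh (4*s) * Real.exp (-8*l) + (-3/32 : ℝ) * s * Real.exp (8*l) + (-1/8 : ℝ) * s * Real.cosh (4*s) * Real.exp (-8*l)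

noncomputable def Ls (s l r : ℝ) : ℝ := (-3/32 : ℝ) * Real.exp (8*l) + (1/8 : ℝ) * Real.cosh (4*s) * Real.exp (-8*l) + (-1/32 : ℝ) * Real.cos (8*s) * Real.exp (8*l) + (-6 : ℝ) * r * Real.sinh (4*s) * Real.exp (-8*l) + (2 : ℝ) * l * Real.cosh (4*s) * Real.exp (-8*l) + (-1/2 : ℝ) * s * Real.sinh (4*s) * Real.exp (-8*l)

lemma hFl (s l r : ℝ) : HasDerivAt (fun l' => F₃ s l' r) (G s l r) l := by
  have h : (fun l' => F₃ s l' r) = (fun y => ((-49/2048 : ℝ) + (1/2048 : ℝ) * Real.cos (8*s) + (-12 : ℝ) * r * r + (3/2 : ℝ) * s * r + (-3/64 : ℝ) * s * s + ((1/4 : ℝ))*y + ((-1 : ℝ))*y^2) * Real.exp (8*y)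
      + ((3/128 : ℝ) * Real.cosh (4*s) + (-3/8 : ℝ) * r * Real.sinh (4*s) + (-1/32 : ℝ) * s * Real.sinh (4*s) + ((1/8 : ℝ) * Real.cosh (4*s))*y + ((0 : ℝ))*y^2) * Real.exp (-8*y)) := by
    funext y; simp only [F₃, G]; ring
  rw [h]
  have H := master_l ((-49/2048 : ℝ) + (1/2048 : ℝ) * Real.cos (8*s) + (-12 : ℝ) * r * r + (3/2 : ℝ) * s * r + (-3/64 : ℝ) * s * s) ((1/4 : ℝ)) ((-1 : ℝ)) ((3/128 : ℝ) * Real.cosh (4*s) + (-3/8 : ℝ) * r * Real.sinh (4*s) + (-1/32 : ℝ) * s * Real.sinh (4*s)) ((1/8 : ℝ) * Real.cosh (4*s)) ((0 : ℝ)) l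
  convert H using 1
  simp only [G]; ring

lemma hGl (s l r : ℝ) : HasDerivAt (fun l' => G s l' r) (Gl s l r) l := by
  have h : (fun l' => G s l' r) = (fun y => ((15/256 : ℝ) + (1/256 : ℝ) * Real.cos (8*s) + (-96 : ℝ) * r * r + (12 : ℝ) * s * r + (-3/8 : ℝ) * s * s + ((0 : ℝ))*y + ((-8 : ℝ))*y^2) * Real.exp (8*y)
      + ((-1/16 : ℝ) * Real.cosh (4*s) + (3 : ℝ) * r * Real.sinh (4*s) + (1/4 : ℝ) * s * Real.sinh (4*s) + ((-1 : ℝ) * Real.cosh (4*s))*y + ((0 : ℝ))*y^2) * Real.exp (-8*y)) := by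
    funext y; simp only [F₃, G]; ring
  rw [h]
  have H := master_l ((15/256 : ℝ) + (1/256 : ℝ) * Real.cos (8*s) + (-96 : ℝ) * r * r + (12 : ℝ) * s * r + (-3/8 : ℝ) * s * s) ((0 : ℝ)) ((-8 : ℝ)) ((-1/16 : ℝ) * Real.cosh (4*s) + (3 : ℝ) * r * Real.sinh (4*s) + (1/4 : ℝ) * s * Real.sinh (4*s)) ((-1 : ℝ) * Real.cosh (4*s)) ((0 : ℝ)) l
  convert H using 1
  simp only [Gl]; ring

lemma hGs (s l r : ℝ) : HasDerivAt (fun s' => G s' l r) (Gs s l r) s := by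
  have h : (fun s' => G s' l r) = (fun y => (((15/256 : ℝ) * Real.exp (8*l) + (-96 : ℝ) * r * r * Real.exp (8*l) + (-8 : ℝ) * l * l * Real.exp (8*l)) + ((12 : ℝ) * r * Real.exp (8*l))*y + ((-3/8 : ℝ) * Real.exp (8*l))*y^2) + (((1/256 : ℝ) * Real.exp (8*l)) + ((0 : ℝ))*y + ((0 : ℝ))*y^2) * Real.cos (8*y) + (((0 : ℝ)) + ((0 : ℝ))*y + ((0 : ℝ))*y^2) * Real.sin (8*y) + (((-1/16 : ℝ) * Real.exp (-8*l) + (-1 : ℝ) * l * Real.exp (-8*l)) + ((0 : ℝ))*y + ((0 : ℝ))*y^2) * Real.cosh (4*y) + (((3 : ℝ) * r * Real.exp (-8*l)) + ((1/4 : ℝ) * Real.exp (-8*l))*y + ((0 : ℝ))*y^2) * Real.sinh (4*y)) := by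
    funext y; simp only [G]; ring
  rw [h]
  have H := master_s ((15/256 : ℝ) * Real.exp (8*l) + (-96 : ℝ) * r * r * Real.exp (8*l) + (-8 : ℝ) * l * l * Real.exp (8*l)) ((12 : ℝ) * r * Real.exp (8*l)) ((-3/8 : ℝ) * Real.exp (8*l)) ((1/256 : ℝ) * Real.exp (8*l)) ((0 : ℝ)) ((0 : ℝ)) ((0 : ℝ)) ((0 : ℝ)) ((0 : ℝ)) ((-1/16 : ℝ) * Real.exp (-8*l) + (-1 : ℝ) * l * Real.exp (-8*l)) ((0 : ℝ)) ((0 : ℝ)) ((3 : ℝ) * r * Real.exp (-8*l)) ((1/4 : ℝ) * Real.exp (-8*l)) ((0 : ℝ)) s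
  convert H using 1
  simp only [Gs]; ring

lemma hGss (s l r : ℝ) : HasDerivAt (fun s' => Gs s' l r) (Gss s l r) s := by
  have h : (fun s' => Gs s' l r) = (fun y => (((12 : ℝ) * r * Real.exp (8*l)) + ((-3/4 : ℝ) * Real.exp (8*l))*y + ((0 : ℝ))*y^2) + (((0 : ℝ)) + ((0 : ℝ))*y + ((0 : ℝ))*y^2) * Real.cos (8*y) + (((-1/32 : ℝ) * Real.exp (8*l)) + ((0 : ℝ))*y + ((0 : ℝ))*y^2) * Real.sin (8*y) + (((12 : ℝ) * r * Real.exp (-8*l)) + ((1 : ℝ) * Real.exp (-8*l))*y + ((0 : ℝ))*y^2) * Real.cosh (4*y) + (((-4 : ℝ) * l * Real.exp (-8*l)) + ((0 : ℝ))*y + ((0 : ℝ))*y^2) * Real.sinh (4*y)) := by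
    funext y; simp only [Gs]; ring
  rw [h]
  have H := master_s ((12 : ℝ) * r * Real.exp (8*l)) ((-3/4 : ℝ) * Real.exp (8*l)) ((0 : ℝ)) ((0 : ℝ)) ((0 : ℝ)) ((0 : ℝ)) ((-1/32 : ℝ) * Real.exp (8*l)) ((0 : ℝ)) ((0 : ℝ)) ((12 : ℝ) * r * Real.exp (-8*l)) ((1 : ℝ) * Real.exp (-8*l)) ((0 : ℝ)) ((-4 : ℝ) * l * Real.exp (-8*l)) ((0 : ℝ)) ((0 : ℝ)) s
  convert H using 1
  simp only [Gss]; ring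

lemma hKs (s l r : ℝ) : HasDerivAt (fun s' => K s' l r) (Ks s l r) s := by
  have h : (fun s' => K s' l r) = (fun y => (((-24 : ℝ) * r * Real.exp (8*l)) + ((3/2 : ℝ) * Real.exp (8*l))*y + ((0 : ℝ))*y^2) + (((0 : ℝ)) + ((0 : ℝ))*y + ((0 : ℝ))*y^2) * Real.cos (8*y) + (((0 : ℝ)) + ((0 : ℝ))*y + ((0 : ℝ))*y^2) * Real.sin (8*y) + (((0 : ℝ)) + ((0 : ℝ))*y + ((0 : ℝ))*y^2) * Real.cosh (4*y) + (((-3/8 : ℝ) * Real.exp (-8*l)) + ((0 : ℝ))*y + ((0 : ℝ))*y^2) * Real.sinh (4*y)) := by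
    funext y; simp only [K]; ring
  rw [h]
  have H := master_s ((-24 : ℝ) * r * Real.exp (8*l)) ((3/2 : ℝ) * Real.exp (8*l)) ((0 : ℝ)) ((0 : ℝ)) ((0 : ℝ)) ((0 : ℝ)) ((0 : ℝ)) ((0 : ℝ)) ((0 : ℝ)) ((0 : ℝ)) ((0 : ℝ)) ((0 : ℝ)) ((-3/8 : ℝ) * Real.exp (-8*l)) ((0 : ℝ)) ((0 : ℝ)) s
  convert H using 1
  simp only [Ks]; ring

lemma hFs (s l r : ℝ) : HasDerivAt (fun s' => F₃ s' l r) (L s l r) s := by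
  have h : (fun s' => F₃ s' l r) = (fun y => (((-49/2048 : ℝ) * Real.exp (8*l) + (-12 : ℝ) * r * r * Real.exp (8*l) + (1/4 : ℝ) * l * Real.exp (8*l) + (-1 : ℝ) * l * l * Real.exp (8*l)) + ((3/2 : ℝ) * r * Real.exp (8*l))*y + ((-3/64 : ℝ) * Real.exp (8*l))*y^2) + (((1/2048 : ℝ) * Real.exp (8*l)) + ((0 : ℝ))*y + ((0 : ℝ))*y^2) * Real.cos (8*y) + (((0 : ℝ)) + ((0 : ℝ))*y + ((0 : ℝ))*y^2) * Real.sin (8*y) + (((3/128 : ℝ) * Real.exp (-8*l) + (1/8 : ℝ) * l * Real.exp (-8*l)) + ((0 : ℝ))*y + ((0 : ℝ))*y^2) * Real.cosh (4*y) + (((-3/8 : ℝ) * r * Real.exp (-8*l)) + ((-1/32 : ℝ) * Real.exp (-8*l))*y + ((0 : ℝ))*y^2) * Real.sinh (4*y)) := by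
    funext y; simp only [F₃]; ring
  rw [h]
  have H := master_s ((-49/2048 : ℝ) * Real.exp (8*l) + (-12 : ℝ) * r * r * Real.exp (8*l) + (1/4 : ℝ) * l * Real.exp (8*l) + (-1 : ℝ) * l * l * Real.exp (8*l)) ((3/2 : ℝ) * r * Real.exp (8*l)) ((-3/64 : ℝ) * Real.exp (8*l)) ((1/2048 : ℝ) * Real.exp (8*l)) ((0 : ℝ)) ((0 : ℝ)) ((0 : ℝ)) ((0 : ℝ)) ((0 : ℝ)) ((3/128 : ℝ) * Real.exp (-8*l) + (1/8 : ℝ) * l * Real.exp (-8*l)) ((0 : ℝ)) ((0 : ℝ)) ((-3/8 : ℝ) * r * Real.exp (-8*l)) ((-1/32 : ℝ) * Real.exp (-8*l)) ((0 : ℝ)) s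
  convert H using 1
  simp only [L]; ring

lemma hLs (s l r : ℝ) : HasDerivAt (fun s' => L s' l r) (Ls s l r) s := by
  have h : (fun s' => L s' l r) = (fun y => (((3/2 : ℝ) * r * Real.exp (8*l)) + ((-3/32 : ℝ) * Real.exp (8*l))*y + ((0 : ℝ))*y^2) + (((0 : ℝ)) + ((0 : ℝ))*y + ((0 : ℝ))*y^2) * Real.cos (8*y) + (((-1/256 : ℝ) * Real.exp (8*l)) + ((0 : ℝ))*y + ((0 : ℝ))*y^2) * Real.sin (8*y) + (((-3/2 : ℝ) * r * Real.exp (-8*l)) + ((-1/8 : ℝ) * Real.exp (-8*l))*y + ((0 : ℝ))*y^2) * Real.cosh (4*y) + (((1/16 : ℝ) * Real.exp (-8*l) + (1/2 : ℝ) * l * Real.exp (-8*l)) + ((0 : ℝ))*y + ((0 : ℝ))*y^2) * Real.sinh (4*y)) := by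
    funext y; simp only [L]; ring
  rw [h]
  have H := master_s ((3/2 : ℝ) * r * Real.exp (8*l)) ((-3/32 : ℝ) * Real.exp (8*l)) ((0 : ℝ)) ((0 : ℝ)) ((0 : ℝ)) ((0 : ℝ)) ((-1/256 : ℝ) * Real.exp (8*l)) ((0 : ℝ)) ((0 : ℝ)) ((-3/2 : ℝ) * r * Real.exp (-8*l)) ((-1/8 : ℝ) * Real.exp (-8*l)) ((0 : ℝ)) ((1/16 : ℝ) * Real.exp (-8*l) + (1/2 : ℝ) * l * Real.exp (-8*l)) ((0 : ℝ)) ((0 : ℝ)) s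
  convert H using 1
  simp only [Ls]; ring

lemma hFr (s l r : ℝ) : HasDerivAt (fun r' => F₃ s l r') (K s l r) r := by
  have h : (fun r' => F₃ s l r') = (fun y => ((-49/2048 : ℝ) * Real.exp (8*l) + (3/128 : ℝ) * Real.cosh (4*s) * Real.exp (-8*l) + (1/2048 : ℝ) * Real.cos (8*s) * Real.exp (8*l) + (1/4 : ℝ) * l * Real.exp (8*l) + (1/8 : ℝ) * l * Real.cosh (4*s) * Real.exp (-8*l) + (-1 : ℝ) * l * l * Real.exp (8*l) + (-1/32 : ℝ) * s * Real.sinh (4*s) * Real.exp (-8*l) + (-3/64 : ℝ) * s * s * Real.exp (8*l)) + ((-3/8 : ℝ) * Real.sinh (4*s) * Real.exp (-8*l) + (3/2 : ℝ) * s * Real.exp (8*l))*y + ((-12 : ℝ) * Real.exp (8*l))*y^2) := by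
    funext y; simp only [F₃]; ring
  rw [h]
  have H := poly2 ((-49/2048 : ℝ) * Real.exp (8*l) + (3/128 : ℝ) * Real.cosh (4*s) * Real.exp (-8*l) + (1/2048 : ℝ) * Real.cos (8*s) * Real.exp (8*l) + (1/4 : ℝ) * l * Real.exp (8*l) + (1/8 : ℝ) * l * Real.cosh (4*s) * Real.exp (-8*l) + (-1 : ℝ) * l * l * Real.exp (8*l) + (-1/32 : ℝ) * s * Real.sinh (4*s) * Real.exp (-8*l) + (-3/64 : ℝ) * s * s * Real.exp (8*l)) ((-3/8 : ℝ) * Real.sinh (4*s) * Real.exp (-8*l) + (3/2 : ℝ) * s * Real.exp (8*l)) ((-12 : ℝ) * Real.exp (8*l)) r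
  convert H using 1
  simp only [K]; ring

/-- F₃ satisfies ∂³F₃/∂s²∂λ + ∂²F₃/∂λ² + (4/3)·∂²F₃/∂s∂r − 8·∂²F₃/∂s²
    − 16·∂F₃/∂λ + 64·F₃ = 0 everywhere
    (the relation α²β + β² + (4/3)αγ − 8α² − 16β + 64). -/
theorem F₃_pde_second_relation (s l r : ℝ) :
    iteratedDeriv 2 (fun s' => deriv (fun l' => F₃ s' l' r) l) s
      + iteratedDeriv 2 (fun l' => F₃ s l' r) l
      + (4 / 3) * deriv (fun s' => deriv (fun r' => F₃ s' l r') r) s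
      - 8 * iteratedDeriv 2 (fun s' => F₃ s' l r) s
      - 16 * deriv (fun l' => F₃ s l' r) l
      + 64 * F₃ s l r = 0 := by
  have e1 : (fun s' => deriv (fun l' => F₃ s' l' r) l) = (fun s' => G s' l r) :=
    funext fun x => (hFl x l r).deriv
  have e3 : (fun s' => deriv (fun r' => F₃ s' l r') r) = (fun s' => K s' l r) :=
    funext fun x => (hFr x l r).deriv
  have h2 : ∀ f : ℝ → ℝ, iteratedDeriv 2 f = deriv (deriv f) := fun f => by
    rw [show (2:ℕ) = 1 + 1 from rfl, iteratedDeriv_succ, iteratedDeriv_one]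
  rw [h2, h2, h2, e1, e3]
  have d1 : deriv (fun s' => G s' l r) = fun s' => Gs s' l r := funext fun x => (hGs x l r).deriv
  have d2 : deriv (fun l' => F₃ s l' r) = fun l' => G s l' r := funext fun x => (hFl s x r).deriv
  have d3 : deriv (fun s' => F₃ s' l r) = fun s' => L s' l r := funext fun x => (hFs x l r).deriv
  rw [d1, d2, d3, (hGss s l r).deriv, (hGl s l r).deriv, (hKs s l r).deriv, (hLs s l r).deriv]
  simp only [F₃, G, Gss, Gl, Ks, Ls]
  ring
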